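/- Let G be a finite simple graph with graph state |G⟩, A ⊆ V(G), and P_A = {r_i P_i}_{i∈A} a collection of signed Pauli observables (P_i ∈ {X,Y,Z}, r_i ∈ {±1}). Define ⟨P_A| := ∏_{i∈A} ⟨+^{P_i}_{r_i π}|, x(P_A) := {i ∈ A : P_i ∈ {X,Y}}, z(P_A) := {i ∈ A : P_i ∈ {Y,Z}}. Suppose |⟨P_A| |G⟩| = 2^{−|A|/2}. Then for any multi-qubit Pauli operator M: M ⟨P_A||G⟩ ≃ ⟨P_A||G⟩ (equal up to global phase) if and only if there exists S ⊆ V(G) with S ∩ z(P_A) = Odd(S) ∩ x(P_A) and M ≃ X_{S ∖ x(P_A)} Z_{Odd(S) ∖ z(P_A)}. -/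

import Mathlib

/-- The Pauli matrices, indexed by `Fin 3`: `0 ↦ X`, `1 ↦ Y`, `2 ↦ Z`. -/
noncomputable def pauliMat : Fin 3 → Matrix (Fin 2) (Fin 2) ℂ :=
  ![!![0, 1; 1, 0], !![0, -Complex.I; Complex.I, 0], !![1, 0; 0, -1]]

/-- `|+^P_0⟩`, the `+1` eigenvector of the Pauli `P`. -/
noncomputable def plusVec : Fin 3 → Fin 2 → ℂ :=
  ![![(Real.sqrt 2 : ℂ)⁻¹, (Real.sqrt 2 : ℂ)⁻¹],
    ![(Real.sqrt 2 : ℂ)⁻¹, Complex.I * (Real.sqrt 2 : ℂ)⁻¹],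
    ![1, 0]]

/-- `|−^P_0⟩`, the `−1` eigenvector of the Pauli `P`. -/
noncomputable def minusVec : Fin 3 → Fin 2 → ℂ :=
  ![![(Real.sqrt 2 : ℂ)⁻¹, -(Real.sqrt 2 : ℂ)⁻¹],
    ![(Real.sqrt 2 : ℂ)⁻¹, -(Complex.I * (Real.sqrt 2 : ℂ)⁻¹)],
    ![0, 1]]

/-- `|+^λ_α⟩ = (|+^P_0⟩ + e^{iα} |−^P_0⟩)/√2`, where `P` is the Pauli complementary to the
plane `λ` (the plane `λ` consists of the two Paulis distinct from `P`). -/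
noncomputable def planePlus (P : Fin 3) (α : ℝ) : Fin 2 → ℂ :=
  (Real.sqrt 2 : ℂ)⁻¹ • (plusVec P + Complex.exp (α * Complex.I) • minusVec P)

/-- `|−^λ_α⟩ = (|+^P_0⟩ − e^{iα} |−^P_0⟩)/√2`. -/
noncomputable def planeMinus (P : Fin 3) (α : ℝ) : Fin 2 → ℂ :=
  (Real.sqrt 2 : ℂ)⁻¹ • (plusVec P - Complex.exp (α * Complex.I) • minusVec P)
/-- `Odd(D)`: the set of vertices having an odd number of neighbours in `D`. -/
def oddNbhd {V : Type*} [Fintype V] [DecidableEq V] (G : SimpleGraph V) [DecidableRel G.Adj]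
    (D : Finset V) : Finset V :=
  Finset.univ.filter fun v => Odd ((G.neighborFinset v ∩ D).card)

/-- The graph state `|G⟩ = (∏_{(u,v) ∈ E(G)} CZ_{u,v}) |+⟩^{⊗V}`. -/
noncomputable def graphState {V : Type*} [Fintype V] [DecidableEq V] (G : SimpleGraph V)
    [DecidableRel G.Adj] : (V → Fin 2) → ℂ :=
  fun s => ((Real.sqrt 2 : ℂ))⁻¹ ^ (Fintype.card V) *
    (-1 : ℂ) ^ ((Finset.univ.filter fun e : V × V =>
      G.Adj e.1 e.2 ∧ s e.1 = 1 ∧ s e.2 = 1).card / 2)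

/-- Squared norm of a state given by its amplitude function. -/
noncomputable def norm2 {ι : Type*} [Fintype ι] (ψ : ι → ℂ) : ℝ := ∑ s, ‖ψ s‖ ^ 2

/-- `|+^P_{xπ}⟩`: for `x = 0` the `+1` eigenvector of `P`, for `x = 1` the `−1` eigenvector
(`r_i = +1` resp. `−1` in the notation `{r_i P_i}`). -/
noncomputable def eigVec (P : Fin 3) : Fin 2 → Fin 2 → ℂ := ![plusVec P, minusVec P]
/-- Pauli `X` applied on every qubit of `A`. -/
def Xop {V : Type*} [DecidableEq V] (A : Finset V) (ψ : (V → Fin 2) → ℂ) : (V → Fin 2) → ℂ :=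
  fun s => ψ fun v => if v ∈ A then s v + 1 else s v

/-- Pauli `Z` applied on every qubit of `B`. -/
def Zop {V : Type*} [DecidableEq V] (B : Finset V) (ψ : (V → Fin 2) → ℂ) : (V → Fin 2) → ℂ :=
  fun s => (-1 : ℂ) ^ (B.filter fun v => s v = 1).card * ψ s
/-- Applying the bras `⟨χ_v|` on every qubit `v ∈ B` of a state `ψ`: the resulting state of
the remaining register is encoded as an amplitude function supported on assignments that
vanish on `B`. -/
noncomputable def braApply {V : Type*} [Fintype V] [DecidableEq V] (B : Finset V)
    (χ : V → Fin 2 → ℂ) (ψ : (V → Fin 2) → ℂ) : (V → Fin 2) → ℂ :=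
  fun t => if ∀ v ∈ B, t v = 0 then
    ∑ s : V → Fin 2, (if ∀ v ∉ B, s v = t v then
      (∏ v ∈ B, (starRingEnd ℂ) (χ v (s v))) * ψ s else 0)
  else 0

namespace S10
open Finset

set_option linter.unusedSectionVars false
variable {V : Type*} [Fintype V] [DecidableEq V] (G : SimpleGraph V) [DecidableRel G.Adj]

def cnt (s : V → Fin 2) : ℕ :=
  (Finset.univ.filter fun e : V × V => G.Adj e.1 e.2 ∧ s e.1 = 1 ∧ s e.2 = 1).card

def ob (w : V → Fin 2) (v : V) : ℕ := ((G.neighborFinset v).filter fun u => w u = 1).card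

def indic (S : Finset V) : V → Fin 2 := fun v => if v ∈ S then 1 else 0

lemma iota_add (u v : Fin 2) : (((u+v):Fin 2).val : ℤ) = u.val + v.val - 2*((u.val:ℤ)*v.val) := by revert u v; decide

lemma bit_mul (u v : Fin 2) : (if (u = 1 ∧ v = 1) then (1:ℤ) else 0) = (u.val:ℤ) * v.val := by revert u v; decide

lemma sum_swap_AP {M : Type*} [AddCommMonoid M] (f : V → V → M) :
    ∑ e ∈ univ.filter (fun e : V × V => G.Adj e.1 e.2), f e.1 e.2
      = ∑ e ∈ univ.filter (fun e : V × V => G.Adj e.1 e.2), f e.2 e.1 := by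
  apply Finset.sum_nbij' (i := fun e => (e.2, e.1)) (j := fun e => (e.2, e.1)) <;>
    simp [G.adj_comm]

lemma cnt_cast (s : V → Fin 2) : (cnt G s : ℤ) =
    ∑ e ∈ univ.filter (fun e : V×V => G.Adj e.1 e.2), ((s e.1).val : ℤ) * ((s e.2).val : ℤ) := by
  rw [cnt, ← Finset.filter_filter, Finset.card_filter]
  push_cast
  exact Finset.sum_congr rfl fun e _ => bit_mul _ _

lemma ob_cast (w : V → Fin 2) (v : V) : (ob G w v : ℤ) = ∑ u ∈ G.neighborFinset v, ((w u).val : ℤ) := by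
  rw [ob, Finset.card_filter]
  push_cast
  refine Finset.sum_congr rfl fun u _ => ?_
  rcases Fin.exists_fin_two.mp ⟨w u, rfl⟩ with h | h <;> simp [h]

lemma X_as_ob (s w : V → Fin 2) :
    ∑ e ∈ univ.filter (fun e : V×V => G.Adj e.1 e.2), ((s e.1).val : ℤ) * ((w e.2).val : ℤ)
      = ∑ v, ((s v).val : ℤ) * (ob G w v : ℤ) := by
  rw [Finset.sum_filter, ← Finset.univ_product_univ, Finset.sum_product]
  refine Finset.sum_congr rfl fun a _ => ?_
  rw [ob_cast, Finset.mul_sum, SimpleGraph.neighborFinset_eq_filter, Finset.sum_filter]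

end S10

namespace S10
open Finset
variable {V : Type*} [Fintype V] [DecidableEq V] (G : SimpleGraph V) [DecidableRel G.Adj]

lemma cnt_add (s w : V → Fin 2) : ∃ m : ℤ,
    (cnt G (fun v => s v + w v) : ℤ)
      = cnt G s + cnt G w + 2 * (∑ v, ((s v).val:ℤ) * (ob G w v)) + 4 * m := by
  classical
  refine ⟨(∑ e ∈ univ.filter (fun e : V×V => G.Adj e.1 e.2),
        ((s e.1).val:ℤ)*(w e.1).val*(s e.2).val*(w e.2).val)
      - (∑ e ∈ univ.filter (fun e : V×V => G.Adj e.1 e.2),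
        ((s e.1).val:ℤ)*(w e.1).val*(s e.2).val)
      - (∑ e ∈ univ.filter (fun e : V×V => G.Adj e.1 e.2),
        ((s e.1).val:ℤ)*(w e.1).val*(w e.2).val), ?_⟩
  have h1 : (∑ e ∈ univ.filter (fun e : V×V => G.Adj e.1 e.2),
        ((s e.1).val:ℤ)*(s e.2).val*(w e.2).val)
      = ∑ e ∈ univ.filter (fun e : V×V => G.Adj e.1 e.2),
        ((s e.1).val:ℤ)*(w e.1).val*(s e.2).val := by
    rw [sum_swap_AP G (fun a b => ((s a).val:ℤ)*(s b).val*(w b).val)]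
    exact Finset.sum_congr rfl (fun e _ => by ring)
  have h2 : (∑ e ∈ univ.filter (fun e : V×V => G.Adj e.1 e.2),
        ((w e.1).val:ℤ)*(s e.2).val*(w e.2).val)
      = ∑ e ∈ univ.filter (fun e : V×V => G.Adj e.1 e.2),
        ((s e.1).val:ℤ)*(w e.1).val*(w e.2).val := by
    rw [sum_swap_AP G (fun a b => ((w a).val:ℤ)*(s b).val*(w b).val)]
    exact Finset.sum_congr rfl (fun e _ => by ring)
  have h3 : (∑ e ∈ univ.filter (fun e : V×V => G.Adj e.1 e.2),
        ((w e.1).val:ℤ)*(s e.2).val)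
      = ∑ e ∈ univ.filter (fun e : V×V => G.Adj e.1 e.2),
        ((s e.1).val:ℤ)*(w e.2).val := by
    rw [sum_swap_AP G (fun a b => ((w a).val:ℤ)*(s b).val)]
    exact Finset.sum_congr rfl (fun e _ => by ring)
  rw [cnt_cast, cnt_cast, cnt_cast, ← X_as_ob]
  have key : (∑ e ∈ univ.filter (fun e : V×V => G.Adj e.1 e.2),
      (((fun v => s v + w v) e.1).val:ℤ) * (((fun v => s v + w v) e.2).val:ℤ))
      = ∑ e ∈ univ.filter (fun e : V×V => G.Adj e.1 e.2),
      (((s e.1).val:ℤ)*(s e.2).val + ((w e.1).val:ℤ)*(w e.2).val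
        + (((s e.1).val:ℤ)*(w e.2).val + ((w e.1).val:ℤ)*(s e.2).val)
        - 2*(((s e.1).val:ℤ)*(w e.1).val*(s e.2).val)
        - 2*(((s e.1).val:ℤ)*(s e.2).val*(w e.2).val)
        - 2*(((s e.1).val:ℤ)*(w e.1).val*(w e.2).val)
        - 2*(((w e.1).val:ℤ)*(s e.2).val*(w e.2).val)
        + 4*(((s e.1).val:ℤ)*(w e.1).val*(s e.2).val*(w e.2).val)) := by
    refine Finset.sum_congr rfl (fun e _ => ?_)
    simp only []
    rw [iota_add, iota_add]; ring
  rw [key]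
  simp only [Finset.sum_add_distrib, Finset.sum_sub_distrib, ← Finset.mul_sum]
  rw [h1, h2, h3]
  ring

end S10

namespace S10
open Finset Complex
variable {V : Type*} [Fintype V] [DecidableEq V] (G : SimpleGraph V) [DecidableRel G.Adj]

lemma even_cnt (s : V → Fin 2) : Even (cnt G s) := by
  classical
  set e := Fintype.equivFin V with he
  set q : V × V → Prop := fun p => G.Adj p.1 p.2 ∧ s p.1 = 1 ∧ s p.2 = 1 with hq
  have hcard : (univ.filter fun p : V×V => q p ∧ e p.1 < e p.2).card
      = (univ.filter fun p : V×V => q p ∧ e p.2 < e p.1).card := by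
    refine Finset.card_nbij' (i := fun p => (p.2, p.1)) (j := fun p => (p.2, p.1)) ?_ ?_ ?_ ?_
    · intro p hp
      simp only [mem_coe, mem_filter, mem_univ, true_and, hq] at *
      exact ⟨⟨(G.adj_comm _ _).mp hp.1.1, hp.1.2.2, hp.1.2.1⟩, hp.2⟩
    · intro p hp
      simp only [mem_coe, mem_filter, mem_univ, true_and, hq] at *
      exact ⟨⟨(G.adj_comm _ _).mp hp.1.1, hp.1.2.2, hp.1.2.1⟩, hp.2⟩
    · intro p _; rfl
    · intro p _; rfl
  have hsplit : cnt G s = (univ.filter fun p : V×V => q p ∧ e p.1 < e p.2).card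
      + (univ.filter fun p : V×V => q p ∧ e p.2 < e p.1).card := by
    rw [cnt, ← Finset.card_union_of_disjoint]
    · congr 1; ext p
      simp only [mem_union, mem_filter, mem_univ, true_and, hq]
      constructor
      · intro h
        rcases lt_or_gt_of_ne (fun hh => G.ne_of_adj h.1 (e.injective hh)) with h' | h'
        exacts [Or.inl ⟨h, h'⟩, Or.inr ⟨h, h'⟩]
      · rintro (⟨h, _⟩ | ⟨h, _⟩) <;> exact h
    · rw [Finset.disjoint_left]
      rintro p hp hp'
      simp only [mem_filter] at hp hp'
      exact absurd hp'.2.2 (not_lt_of_gt hp.2.2)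
  exact ⟨_, by rw [hsplit, hcard]⟩

lemma neg_one_pow_half {c : ℕ} (h : Even c) : ((-1:ℂ))^(c/2) = Complex.I ^ c := by
  obtain ⟨d, rfl⟩ := h
  rw [show d + d = 2*d by ring, Nat.mul_div_cancel_left _ two_pos, pow_mul, Complex.I_sq]

lemma I_zpow_key (a b X m : ℤ) (h : a = b + 2*X + 4*m) :
    Complex.I ^ a = Complex.I ^ b * ((-1:ℂ)) ^ X := by
  rw [h, zpow_add₀ Complex.I_ne_zero, zpow_add₀ Complex.I_ne_zero, mul_assoc]
  congr 1
  rw [zpow_mul, zpow_mul]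
  have h2 : Complex.I ^ (2:ℤ) = -1 := by
    rw [show (2:ℤ) = ((2:ℕ):ℤ) from rfl, zpow_natCast, Complex.I_sq]
  have h4 : Complex.I ^ (4:ℤ) = 1 := by
    rw [show (4:ℤ) = ((4:ℕ):ℤ) from rfl, zpow_natCast, Complex.I_pow_four]
  rw [h2, h4, one_zpow, mul_one]

lemma gs_add (s w : V → Fin 2) :
    graphState G (fun v => s v + w v)
      = Complex.I ^ cnt G w * (∏ v, (-1:ℂ) ^ (ob G w v * (s v).val)) * graphState G s := by
  obtain ⟨m, hm⟩ := cnt_add G s w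
  show ((Real.sqrt 2 : ℂ))⁻¹ ^ (Fintype.card V) * (-1:ℂ)^(cnt G (fun v => s v + w v)/2) = _
  rw [neg_one_pow_half (even_cnt G _)]
  show _ = Complex.I ^ cnt G w * _ * (((Real.sqrt 2 : ℂ))⁻¹ ^ (Fintype.card V) * (-1:ℂ)^(cnt G s/2))
  rw [neg_one_pow_half (even_cnt G _)]
  have hprod : (∏ v, (-1:ℂ) ^ (ob G w v * (s v).val))
      = ((-1:ℂ)) ^ ((∑ v, ((s v).val:ℤ) * (ob G w v))) := by
    rw [Finset.prod_pow_eq_pow_sum]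
    have : ((∑ v, ob G w v * (s v).val : ℕ) : ℤ) = ∑ v, ((s v).val:ℤ) * (ob G w v) := by
      push_cast; exact Finset.sum_congr rfl fun v _ => mul_comm _ _
    rw [← this, zpow_natCast]
  have hkey : Complex.I ^ cnt G (fun v => s v + w v)
      = Complex.I ^ (cnt G s + cnt G w) * ((-1:ℂ)) ^ ((∑ v, ((s v).val:ℤ) * (ob G w v))) := by
    have := I_zpow_key (cnt G (fun v => s v + w v)) ((cnt G s : ℤ) + cnt G w)
      (∑ v, ((s v).val:ℤ) * (ob G w v)) m (by linarith [hm])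
    rw [zpow_natCast] at this
    rw [this, show ((cnt G s : ℤ) + cnt G w) = ((cnt G s + cnt G w : ℕ) : ℤ) by push_cast; ring,
      zpow_natCast]
  rw [hkey, hprod, pow_add]
  try ring

end S10

namespace S10
open Finset Complex

def xbit : Fin 3 → Fin 2 := ![1,1,0]
def zbit : Fin 3 → Fin 2 := ![0,1,1]

noncomputable def muT (P : Fin 3) (r a b : Fin 2) : ℂ :=
  if a = 0 ∧ b = 0 then 1 else ((-1:ℂ)^(r.val) * (if P = 1 then -Complex.I else 1))

def bitOf (e : ℕ) : Fin 2 := if Even e then 0 else 1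

lemma pow_bitOf (e : ℕ) (u : Fin 2) : (-1:ℂ)^(e*u.val) = (-1:ℂ)^((bitOf e).val * u.val) := by
  rcases Nat.even_or_odd e with he | he
  · rw [bitOf, if_pos he, (he.mul_right u.val).neg_one_pow]
    norm_num
  · rw [bitOf, if_neg (Nat.not_even_iff_odd.mpr he)]
    fin_cases u
    · norm_num
    · simp [he.neg_one_pow]

lemma odd_bitOf (e : ℕ) : bitOf e = 1 ↔ Odd e := by
  rw [bitOf]; rcases Nat.even_or_odd e with he | he <;>
    simp [he, Nat.not_even_iff_odd, Nat.not_odd_iff_even]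

lemma fin3_cases (P : Fin 3) : P = 0 ∨ P = 1 ∨ P = 2 := by revert P; decide
lemma fin2_cases (a : Fin 2) : a = 0 ∨ a = 1 := by revert a; decide

lemma htable (P : Fin 3) (r a b : Fin 2)
    (h : (∑ u : Fin 2, eigVec P r u * (starRingEnd ℂ) (eigVec P r (u+a)) * (-1:ℂ)^(b.val*u.val)) ≠ 0) :
    (a = 0 ∧ b = 0) ∨ (a = xbit P ∧ b = zbit P) := by
  rcases fin3_cases P with rfl | rfl | rfl <;> rcases fin2_cases r with rfl | rfl <;>
    rcases fin2_cases a with rfl | rfl <;> rcases fin2_cases b with rfl | rfl <;>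
    first
      | (left; exact ⟨rfl, rfl⟩)
      | (right; exact ⟨rfl, rfl⟩)
      | (exfalso; apply h;
         simp [eigVec, plusVec, minusVec, Fin.sum_univ_two, Complex.conj_ofReal] <;>
         ring_nf <;> simp [Complex.I_sq] <;> ring_nf)

lemma etable (P : Fin 3) (r a b : Fin 2)
    (h : (a = 0 ∧ b = 0) ∨ (a = xbit P ∧ b = zbit P)) :
    ‖muT P r a b‖ = 1 ∧ ∀ u : Fin 2,
      (starRingEnd ℂ) (eigVec P r (u + a)) * (-1:ℂ)^(b.val * u.val)
        = muT P r a b * (starRingEnd ℂ) (eigVec P r u) := by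
  rcases fin3_cases P with rfl | rfl | rfl <;> rcases fin2_cases r with rfl | rfl <;>
    rcases fin2_cases a with rfl | rfl <;> rcases fin2_cases b with rfl | rfl <;>
    first
      | (exact absurd h (by decide))
      | (refine ⟨by simp [muT, Complex.norm_I, map_neg], fun u => ?_⟩
         rcases fin2_cases u with rfl | rfl <;>
           simp [muT, eigVec, plusVec, minusVec, Complex.conj_ofReal] <;>
           ring_nf <;> simp [Complex.I_sq] <;> ring_nf)

end S10


namespace S10
open Finset Complex
set_option linter.unusedSectionVars false
variable {V : Type*} [Fintype V] [DecidableEq V] (G : SimpleGraph V) [DecidableRel G.Adj]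

lemma indic_one {S : Finset V} {v : V} : indic S v = 1 ↔ v ∈ S := by
  by_cases h : v ∈ S <;> simp [indic, h]

lemma indic_zero {S : Finset V} {v : V} : indic S v = 0 ↔ v ∉ S := by
  by_cases h : v ∈ S <;> simp [indic, h]

lemma xop_arg (S : Finset V) (t : V → Fin 2) :
    (fun v => if v ∈ S then t v + 1 else t v) = fun v => t v + indic S v :=
  funext fun v => by by_cases h : v ∈ S <;> simp [indic, h]

lemma bit_val_ite (u : Fin 2) : (u.val : ℕ) = if u = 1 then 1 else 0 := by revert u; decide

lemma zop_sign (Bz : Finset V) (t : V → Fin 2) :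
    ((-1:ℂ)) ^ (Bz.filter fun v => t v = 1).card = ∏ v ∈ Bz, (-1:ℂ)^((t v).val) := by
  rw [Finset.prod_pow_eq_pow_sum, Finset.card_filter]
  congr 1
  exact Finset.sum_congr rfl fun v _ => (bit_val_ite (t v)).symm

lemma sign_bit_add (u w : Fin 2) :
    (-1:ℂ)^(((u+w) : Fin 2)).val = (-1)^u.val * (-1)^w.val := by
  rcases fin2_cases u with rfl | rfl <;> rcases fin2_cases w with rfl | rfl <;> norm_num [show ((1:Fin 2)+1 : Fin 2) = 0 from rfl, show ((2:Fin 2)).val = 0 from rfl]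

lemma sign_sq (n : ℕ) : ((-1:ℂ)^n) * ((-1)^n) = 1 := by
  rw [← pow_add]; exact Even.neg_one_pow ⟨n, rfl⟩

lemma ob_indic (S : Finset V) (v : V) :
    ob G (indic S) v = (G.neighborFinset v ∩ S).card := by
  rw [ob]
  congr 1
  rw [← Finset.filter_mem_eq_inter]
  exact Finset.filter_congr fun u _ => by simp [indic_one]

lemma mem_oddNbhd {S : Finset V} {v : V} :
    v ∈ oddNbhd G S ↔ Odd (ob G (indic S) v) := by
  rw [oddNbhd, Finset.mem_filter, ob_indic]
  simp

lemma sign_ob_bit (e : ℕ) (u : Fin 2) :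
    (-1:ℂ)^(e * u.val) = if Odd e then (-1:ℂ)^u.val else 1 := by
  rw [pow_bitOf]
  rcases Nat.even_or_odd e with he | he
  · simp [bitOf, he, Nat.not_odd_iff_even.mpr he]
  · simp [bitOf, he, Nat.not_even_iff_odd.mpr he]

end S10

namespace S10
open Finset Complex
set_option linter.unusedSectionVars false
variable {V : Type*} [Fintype V] [DecidableEq V] (G : SimpleGraph V) [DecidableRel G.Adj]

lemma bitOf_eq_zero {e : ℕ} : bitOf e = 0 ↔ Even e := by
  rw [bitOf]; rcases Nat.even_or_odd e with he | he <;>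
    simp [he, Nat.not_even_iff_odd, Nat.not_odd_iff_even]

lemma fin2_addself (u w : Fin 2) : u + w + w = u := by revert u w; decide

lemma xopzop (Bx Bz : Finset V) (ψ : (V → Fin 2) → ℂ) (t : V → Fin 2) :
    Xop Bx (Zop Bz ψ) t
      = (∏ v ∈ Bz, (-1:ℂ)^(((t v + indic Bx v) : Fin 2)).val) * ψ (fun v => t v + indic Bx v) := by
  simp only [Xop, Zop]
  have harg : (fun v => if v ∈ Bx then t v + 1 else t v) = (fun v => t v + indic Bx v) :=
    funext fun v => by by_cases h : v ∈ Bx <;> simp [indic, h]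
  have hfil : (Bz.filter fun v => (if v ∈ Bx then t v + 1 else t v) = 1)
      = (Bz.filter fun v => t v + indic Bx v = 1) :=
    Finset.filter_congr fun v _ => by by_cases h : v ∈ Bx <;> simp [indic, h]
  rw [hfil, harg, zop_sign]

lemma backward_core (A : Finset V) (P : V → Fin 3) (r : V → Fin 2) (S : Finset V)
    (hcond : S ∩ (A.filter fun i => P i ≠ 0) = oddNbhd G S ∩ (A.filter fun i => P i ≠ 2)) :
    ∃ c : ℂ, ‖c‖ = 1 ∧
      Xop (S \ (A.filter fun i => P i ≠ 2))
        (Zop (oddNbhd G S \ (A.filter fun i => P i ≠ 0))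
          (braApply A (fun i => eigVec (P i) (r i)) (graphState G)))
        = c • braApply A (fun i => eigVec (P i) (r i)) (graphState G) := by
  classical
  set Bx := S \ (A.filter fun i => P i ≠ 2) with hBxdef
  set Bz := oddNbhd G S \ (A.filter fun i => P i ≠ 0) with hBzdef
  have hmem : ∀ i ∈ A, ((i ∈ S ∧ P i ≠ 0) ↔ (i ∈ oddNbhd G S ∧ P i ≠ 2)) := by
    intro i hi
    have h := Finset.ext_iff.mp hcond i
    simp only [Finset.mem_inter, Finset.mem_filter, hi, true_and] at h
    exact h
  have compat : ∀ i ∈ A,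
      ((indic S i = 0 ∧ bitOf (ob G (indic S) i) = 0)
        ∨ (indic S i = xbit (P i) ∧ bitOf (ob G (indic S) i) = zbit (P i))) := by
    intro i hi
    by_cases hS : i ∈ S <;> by_cases hO : i ∈ oddNbhd G S
    · have hP : P i = 1 := by
        rcases fin3_cases (P i) with h0 | h1 | h2
        · exact absurd ((hmem i hi).mpr ⟨hO, by rw [h0]; decide⟩).2 (by rw [h0]; exact fun h => h rfl)
        · exact h1
        · exact absurd ((hmem i hi).mp ⟨hS, by rw [h2]; decide⟩).2 (by intro h; exact h h2)
      right
      refine ⟨by rw [hP, show xbit 1 = 1 from rfl]; exact indic_one.mpr hS,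
        by rw [hP, show zbit 1 = 1 from rfl]; exact odd_bitOf _ |>.mpr (mem_oddNbhd G |>.mp hO)⟩
    · have hP : P i = 0 := by
        rcases fin3_cases (P i) with h0 | h1 | h2
        · exact h0
        · exact absurd ((hmem i hi).mp ⟨hS, by rw [h1]; decide⟩).1 hO
        · exact absurd ((hmem i hi).mp ⟨hS, by rw [h2]; decide⟩).2 (by intro h; exact h h2)
      right
      have heven : Even (ob G (indic S) i) :=
        Nat.not_odd_iff_even.mp (fun ho => hO ((mem_oddNbhd G).mpr ho))
      refine ⟨by rw [hP, show xbit 0 = 1 from rfl]; exact indic_one.mpr hS,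
        by rw [hP, show zbit 0 = 0 from rfl]; exact bitOf_eq_zero.mpr heven⟩
    · have hP : P i = 2 := by
        rcases fin3_cases (P i) with h0 | h1 | h2
        · exact absurd ((hmem i hi).mpr ⟨hO, by rw [h0]; decide⟩).1 hS
        · exact absurd ((hmem i hi).mpr ⟨hO, by rw [h1]; decide⟩).1 hS
        · exact h2
      right
      refine ⟨by rw [hP, show xbit 2 = 0 from rfl]; exact indic_zero.mpr hS,
        by rw [hP, show zbit 2 = 1 from rfl]; exact odd_bitOf _ |>.mpr (mem_oddNbhd G |>.mp hO)⟩
    · exact Or.inl ⟨indic_zero.mpr hS, bitOf_eq_zero.mpr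
        (Nat.not_odd_iff_even.mp (fun ho => hO ((mem_oddNbhd G).mpr ho)))⟩
  have hBxA : ∀ i ∈ A, indic Bx i = 0 := by
    intro i hi
    rw [indic_zero, hBxdef, Finset.mem_sdiff]
    rintro ⟨hS, hx⟩
    have hP2 : P i = 2 := by
      by_contra h2
      exact hx (Finset.mem_filter.mpr ⟨hi, h2⟩)
    exact ((hmem i hi).mp ⟨hS, by rw [hP2]; decide⟩).2 hP2
  have hBzA : ∀ i ∈ A, indic Bz i = 0 := by
    intro i hi
    rw [indic_zero, hBzdef, Finset.mem_sdiff]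
    rintro ⟨hO, hz⟩
    have hP0 : P i = 0 := by
      by_contra h0
      exact hz (Finset.mem_filter.mpr ⟨hi, h0⟩)
    exact ((hmem i hi).mpr ⟨hO, by rw [hP0]; decide⟩).2 hP0
  have hBxO : ∀ v, v ∉ A → (v ∈ Bx ↔ v ∈ S) := by
    intro v hv
    rw [hBxdef, Finset.mem_sdiff, Finset.mem_filter]
    exact ⟨fun h => h.1, fun h => ⟨h, fun hh => hv hh.1⟩⟩
  have hBzO : ∀ v, v ∉ A → (v ∈ Bz ↔ v ∈ oddNbhd G S) := by
    intro v hv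
    rw [hBzdef, Finset.mem_sdiff, Finset.mem_filter]
    exact ⟨fun h => h.1, fun h => ⟨h, fun hh => hv hh.1⟩⟩
  have hBzsub : Bz ⊆ Aᶜ := by
    intro v hvBz
    rw [Finset.mem_compl]
    intro hvA
    exact absurd (indic_one.mpr hvBz) (by rw [hBzA v hvA]; decide)
  refine ⟨(∏ v ∈ Bz, (-1:ℂ)^((indic Bx v).val))
      * ((∏ i ∈ A, muT (P i) (r i) (indic S i) (bitOf (ob G (indic S) i)))
        * Complex.I ^ cnt G (indic S)), ?_, ?_⟩
  · rw [norm_mul, norm_mul, norm_pow, Complex.norm_I, one_pow, mul_one, norm_prod, norm_prod]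
    rw [Finset.prod_congr rfl (fun v _ => by
        rw [norm_pow, norm_neg, norm_one, one_pow] : ∀ v ∈ Bz, ‖(-1:ℂ)^((indic Bx v).val)‖ = 1),
      Finset.prod_const_one, one_mul]
    rw [Finset.prod_congr rfl (fun i hi => (etable _ (r i) _ _ (compat i hi)).1), Finset.prod_const_one]
  · funext t
    rw [xopzop]
    simp only [Pi.smul_apply, smul_eq_mul]
    have hzs : (∏ v ∈ Bz, (-1:ℂ)^(((t v + indic Bx v) : Fin 2)).val)
        = (∏ v ∈ Bz, (-1:ℂ)^((t v).val)) * ∏ v ∈ Bz, (-1:ℂ)^((indic Bx v).val) := by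
      rw [← Finset.prod_mul_distrib]
      exact Finset.prod_congr rfl (fun v _ => sign_bit_add _ _)
    rw [hzs]
    simp only [braApply]
    have hcondA : (∀ v ∈ A, t v + indic Bx v = 0) ↔ (∀ v ∈ A, t v = 0) := by
      refine forall₂_congr (fun i hi => ?_)
      rw [hBxA i hi, add_zero]
    by_cases ht : ∀ v ∈ A, t v = 0
    · rw [if_pos (hcondA.mpr ht), if_pos ht]
      have hinv : Function.Involutive (fun (σ : V → Fin 2) => (fun v => σ v + indic S v)) := by
        intro σ; funext v; exact fin2_addself _ _
      rw [← Function.Bijective.sum_comp hinv.bijective]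
      have hBxS : ∀ v, v ∉ A → indic Bx v = indic S v := by
        intro v hv
        by_cases hS : v ∈ S
        · rw [indic_one.mpr ((hBxO v hv).mpr hS), indic_one.mpr hS]
        · rw [indic_zero.mpr (fun h => hS ((hBxO v hv).mp h)), indic_zero.mpr hS]
      have hsum : (∑ σ : V → Fin 2,
            if ∀ v ∉ A, (fun v => σ v + indic S v) v = t v + indic Bx v then
              (∏ i ∈ A, (starRingEnd ℂ) ((fun i => eigVec (P i) (r i)) i ((fun v => σ v + indic S v) i)))
                * graphState G (fun v => σ v + indic S v) else 0)
          = ((∏ i ∈ A, muT (P i) (r i) (indic S i) (bitOf (ob G (indic S) i)))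
              * Complex.I ^ cnt G (indic S) * (∏ v ∈ Bz, (-1:ℂ)^((t v).val)))
            * ∑ σ : V → Fin 2,
              if ∀ v ∉ A, σ v = t v then
                (∏ i ∈ A, (starRingEnd ℂ) ((fun i => eigVec (P i) (r i)) i (σ i)))
                  * graphState G σ else 0 := by
        rw [Finset.mul_sum]
        refine Finset.sum_congr rfl (fun σ _ => ?_)
        have hcnd : (∀ v ∉ A, (fun v => σ v + indic S v) v = t v + indic Bx v)
            ↔ (∀ v ∉ A, σ v = t v) := by
          refine forall₂_congr (fun v hv => ?_)
          simp only []
          rw [hBxS v hv, add_left_inj]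
        by_cases hσ : ∀ v ∉ A, σ v = t v
        · rw [if_pos (hcnd.mpr hσ), if_pos hσ]
          rw [gs_add]
          rw [← Finset.prod_mul_prod_compl A (fun v => (-1:ℂ)^(ob G (indic S) v * (σ v).val))]
          have houter : (∏ v ∈ Aᶜ, (-1:ℂ)^(ob G (indic S) v * (σ v).val))
              = ∏ v ∈ Bz, (-1:ℂ)^((t v).val) := by
            rw [Finset.prod_congr rfl (fun v hv => by
              rw [hσ v (Finset.mem_compl.mp hv), sign_ob_bit]
              rw [if_congr (Iff.trans (Iff.symm (mem_oddNbhd G))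
                    (Iff.symm (hBzO v (Finset.mem_compl.mp hv)))) rfl rfl] :
              ∀ v ∈ Aᶜ, (-1:ℂ)^(ob G (indic S) v * (σ v).val)
                = if v ∈ Bz then (-1:ℂ)^((t v).val) else 1)]
            rw [Finset.prod_ite_mem, Finset.inter_eq_right.mpr hBzsub]
          have hinner : (∏ i ∈ A, (starRingEnd ℂ) (eigVec (P i) (r i) (σ i + indic S i)))
                * (∏ i ∈ A, (-1:ℂ)^(ob G (indic S) i * (σ i).val))
              = (∏ i ∈ A, muT (P i) (r i) (indic S i) (bitOf (ob G (indic S) i)))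
                * (∏ i ∈ A, (starRingEnd ℂ) (eigVec (P i) (r i) (σ i))) := by
            rw [← Finset.prod_mul_distrib, ← Finset.prod_mul_distrib]
            refine Finset.prod_congr rfl (fun i hi => ?_)
            rw [pow_bitOf]
            exact (etable (P i) (r i) _ _ (compat i hi)).2 (σ i)
          simp only []
          rw [houter]
          calc (∏ i ∈ A, (starRingEnd ℂ) (eigVec (P i) (r i) (σ i + indic S i)))
                * (Complex.I ^ cnt G (indic S)
                  * ((∏ i ∈ A, (-1:ℂ)^(ob G (indic S) i * (σ i).val))
                      * (∏ v ∈ Bz, (-1:ℂ)^((t v).val)))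
                  * graphState G σ)
              = ((∏ i ∈ A, (starRingEnd ℂ) (eigVec (P i) (r i) (σ i + indic S i)))
                  * (∏ i ∈ A, (-1:ℂ)^(ob G (indic S) i * (σ i).val)))
                * Complex.I ^ cnt G (indic S) * (∏ v ∈ Bz, (-1:ℂ)^((t v).val))
                * graphState G σ := by ring
            _ = _ := by rw [hinner]; ring
        · rw [if_neg (fun h => hσ (hcnd.mp h)), if_neg hσ, mul_zero]
      rw [hsum]
      have hsq : (∏ v ∈ Bz, (-1:ℂ)^((t v).val)) * (∏ v ∈ Bz, (-1:ℂ)^((t v).val)) = 1 := by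
        rw [← Finset.prod_mul_distrib]
        rw [Finset.prod_congr rfl (fun v _ => sign_sq ((t v).val))]
        exact Finset.prod_const_one
      calc (∏ v ∈ Bz, (-1:ℂ)^((t v).val)) * (∏ v ∈ Bz, (-1:ℂ)^((indic Bx v).val))
            * ((∏ i ∈ A, muT (P i) (r i) (indic S i) (bitOf (ob G (indic S) i)))
                * Complex.I ^ cnt G (indic S) * (∏ v ∈ Bz, (-1:ℂ)^((t v).val))
              * ∑ σ : V → Fin 2,
                if ∀ v ∉ A, σ v = t v then
                  (∏ i ∈ A, (starRingEnd ℂ) ((fun i => eigVec (P i) (r i)) i (σ i)))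
                    * graphState G σ else 0)
          = ((∏ v ∈ Bz, (-1:ℂ)^((t v).val)) * (∏ v ∈ Bz, (-1:ℂ)^((t v).val)))
            * ((∏ v ∈ Bz, (-1:ℂ)^((indic Bx v).val))
              * ((∏ i ∈ A, muT (P i) (r i) (indic S i) (bitOf (ob G (indic S) i)))
                * Complex.I ^ cnt G (indic S))
              * ∑ σ : V → Fin 2,
                if ∀ v ∉ A, σ v = t v then
                  (∏ i ∈ A, (starRingEnd ℂ) ((fun i => eigVec (P i) (r i)) i (σ i)))
                    * graphState G σ else 0) := by ring
        _ = _ := by rw [hsq, one_mul]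
    · rw [if_neg (fun h => ht (hcondA.mp h)), if_neg ht, mul_zero, mul_zero]

end S10

namespace S10
open Finset Complex
set_option linter.unusedSectionVars false
variable {V : Type*} [Fintype V] [DecidableEq V] (G : SimpleGraph V) [DecidableRel G.Adj]

lemma gs_sq (s : V → Fin 2) :
    graphState G s * graphState G s = ((2:ℂ)⁻¹) ^ (Fintype.card V) := by
  rw [graphState]
  have h2 : ((Real.sqrt 2 : ℂ))⁻¹ * ((Real.sqrt 2 : ℂ))⁻¹ = (2:ℂ)⁻¹ := by
    rw [← mul_inv]
    congr 1
    rw [← Complex.ofReal_mul, Real.mul_self_sqrt (by norm_num)]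
    norm_num
  calc ((Real.sqrt 2 : ℂ))⁻¹ ^ (Fintype.card V) * (-1:ℂ)^(cnt G s / 2)
        * (((Real.sqrt 2 : ℂ))⁻¹ ^ (Fintype.card V) * (-1:ℂ)^(cnt G s / 2))
      = (((Real.sqrt 2 : ℂ))⁻¹ * ((Real.sqrt 2 : ℂ))⁻¹) ^ (Fintype.card V)
        * ((-1:ℂ)^(cnt G s / 2) * (-1:ℂ)^(cnt G s / 2)) := by rw [mul_pow]; ring
    _ = ((2:ℂ)⁻¹) ^ (Fintype.card V) := by rw [h2, sign_sq, mul_one]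

lemma conj_gs (s : V → Fin 2) :
    (starRingEnd ℂ) (graphState G s) = graphState G s := by
  rw [graphState, map_mul, map_pow, map_inv₀, Complex.conj_ofReal, map_pow, map_neg, map_one]

lemma pair_sum (A : Finset V) (F1 F2 W : (V → Fin 2) → ℂ)
    (hW : ∀ t s : V → Fin 2, (∀ v, v ∉ A → s v = t v) → W t = W s)
    (β : V → Fin 2) (hβ : ∀ i ∈ A, β i = 0) :
    (∑ t : V → Fin 2, (if ∀ i ∈ A, t i = 0 then
        (∑ s : V → Fin 2, if ∀ v ∉ A, s v = t v then F1 s else 0) * W t *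
          (if ∀ i ∈ A, t i + β i = 0 then
            (∑ s' : V → Fin 2, if ∀ v ∉ A, s' v = t v + β v then F2 s' else 0) else 0)
      else 0))
    = ∑ s : V → Fin 2, F1 s * W s *
        (∑ s' : V → Fin 2, if ∀ v ∉ A, s' v = s v + β v then F2 s' else 0) := by
  classical
  have step1 : ∀ t : V → Fin 2, (if ∀ i ∈ A, t i = 0 then
        (∑ s : V → Fin 2, if ∀ v ∉ A, s v = t v then F1 s else 0) * W t *
          (if ∀ i ∈ A, t i + β i = 0 then
            (∑ s' : V → Fin 2, if ∀ v ∉ A, s' v = t v + β v then F2 s' else 0) else 0)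
      else 0)
      = ∑ s : V → Fin 2, (if (∀ i ∈ A, t i = 0) ∧ (∀ v ∉ A, s v = t v) then
          F1 s * W s *
            (∑ s' : V → Fin 2, if ∀ v ∉ A, s' v = s v + β v then F2 s' else 0) else 0) := by
    intro t
    by_cases hp : ∀ i ∈ A, t i = 0
    · rw [if_pos hp]
      have hp2 : ∀ i ∈ A, t i + β i = 0 := fun i hi => by rw [hp i hi, hβ i hi]; rfl
      rw [if_pos hp2, Finset.sum_mul, Finset.sum_mul]
      refine Finset.sum_congr rfl (fun s _ => ?_)
      by_cases hs : ∀ v ∉ A, s v = t v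
      · rw [if_pos hs, if_pos ⟨hp, hs⟩, hW t s hs]
        have hin : (∑ s' : V → Fin 2, if ∀ v ∉ A, s' v = t v + β v then F2 s' else 0)
            = ∑ s' : V → Fin 2, if ∀ v ∉ A, s' v = s v + β v then F2 s' else 0 := by
          refine Finset.sum_congr rfl (fun s' _ => ?_)
          have : (∀ v ∉ A, s' v = t v + β v) ↔ (∀ v ∉ A, s' v = s v + β v) :=
            forall₂_congr (fun v hv => by rw [hs v hv])
          rw [if_congr this rfl rfl]
        rw [hin]
      · rw [if_neg hs, if_neg (fun h => hs h.2), zero_mul, zero_mul]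
    · rw [if_neg hp]
      symm
      refine Finset.sum_eq_zero (fun s _ => ?_)
      rw [if_neg (fun h => hp h.1)]
  rw [Finset.sum_congr rfl (fun t _ => step1 t), Finset.sum_comm]
  refine Finset.sum_congr rfl (fun s _ => ?_)
  refine (Finset.sum_eq_single_of_mem (fun v => if v ∈ A then 0 else s v)
      (Finset.mem_univ _) ?_).trans ?_
  · intro t _ hne
    by_cases hc : (∀ i ∈ A, t i = 0) ∧ (∀ v ∉ A, s v = t v)
    · exfalso
      apply hne
      funext v
      by_cases hv : v ∈ A
      · rw [if_pos hv, hc.1 v hv]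
      · rw [if_neg hv, hc.2 v hv]
    · rw [if_neg hc]
  · have h1 : ∀ i ∈ A, (if i ∈ A then (0:Fin 2) else s i) = 0 := fun i hi => if_pos hi
    have h2 : ∀ v ∉ A, s v = (if v ∈ A then (0:Fin 2) else s v) := fun v hv => (if_neg hv).symm
    rw [if_pos ⟨h1, h2⟩]

end S10

namespace S10
open Finset Complex
set_option linter.unusedSectionVars false
variable {V : Type*} [Fintype V] [DecidableEq V] (G : SimpleGraph V) [DecidableRel G.Adj]

lemma xbit_one {p : Fin 3} : xbit p = 1 ↔ p ≠ 2 := by revert p; decide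
lemma zbit_one {p : Fin 3} : zbit p = 1 ↔ p ≠ 0 := by revert p; decide
lemma xbit_zero {p : Fin 3} : xbit p = 0 ↔ p = 2 := by revert p; decide
lemma zbit_zero {p : Fin 3} : zbit p = 0 ↔ p = 0 := by revert p; decide

lemma forward_core (A : Finset V) (P : V → Fin 3) (r : V → Fin 2) (B C : Finset V)
    (hB : B ⊆ Aᶜ) (hC : C ⊆ Aᶜ)
    (hne : (∑ t : V → Fin 2,
        (starRingEnd ℂ) (braApply A (fun i => eigVec (P i) (r i)) (graphState G) t)
          * Xop B (Zop C (braApply A (fun i => eigVec (P i) (r i)) (graphState G))) t) ≠ 0) :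
    ∃ S : Finset V,
      S ∩ (A.filter fun i => P i ≠ 0) = oddNbhd G S ∩ (A.filter fun i => P i ≠ 2) ∧
      S \ (A.filter fun i => P i ≠ 2) = B ∧
      oddNbhd G S \ (A.filter fun i => P i ≠ 0) = C := by
  classical
  have hBA : ∀ i ∈ A, i ∉ B := fun i hi hiB => (Finset.mem_compl.mp (hB hiB)) hi
  have hCA : ∀ i ∈ A, i ∉ C := fun i hi hiC => (Finset.mem_compl.mp (hC hiC)) hi
  set F1 : (V → Fin 2) → ℂ :=
    fun s => (∏ i ∈ A, eigVec (P i) (r i) (s i)) * graphState G s with hF1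
  set F2 : (V → Fin 2) → ℂ :=
    fun s => (∏ i ∈ A, (starRingEnd ℂ) (eigVec (P i) (r i) (s i))) * graphState G s with hF2
  set W : (V → Fin 2) → ℂ :=
    fun s => ∏ v ∈ C, (-1:ℂ)^(((s v + indic B v) : Fin 2)).val with hWdef
  -- Step 1 : rewrite the sum into the `pair_sum` shape
  have hstep1 : ∀ t : V → Fin 2,
      (starRingEnd ℂ) (braApply A (fun i => eigVec (P i) (r i)) (graphState G) t)
        * Xop B (Zop C (braApply A (fun i => eigVec (P i) (r i)) (graphState G))) t
      = (if ∀ i ∈ A, t i = 0 then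
          (∑ s : V → Fin 2, if ∀ v ∉ A, s v = t v then F1 s else 0) * W t *
            (if ∀ i ∈ A, t i + indic B i = 0 then
              (∑ s' : V → Fin 2, if ∀ v ∉ A, s' v = t v + indic B v then F2 s' else 0) else 0)
        else 0) := by
    intro t
    rw [xopzop]
    rw [braApply, braApply]
    rw [apply_ite (starRingEnd ℂ), map_zero, map_sum]
    have hconj : ∀ s : V → Fin 2,
        (starRingEnd ℂ) (if ∀ v ∉ A, s v = t v then
            (∏ v ∈ A, (starRingEnd ℂ) ((fun i => eigVec (P i) (r i)) v (s v)))
              * graphState G s else 0)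
        = (if ∀ v ∉ A, s v = t v then F1 s else 0) := by
      intro s
      rw [apply_ite (starRingEnd ℂ), map_zero, map_mul, map_prod, conj_gs]
      congr 1
      rw [hF1]
      simp only []
      congr 1
      exact Finset.prod_congr rfl (fun i _ => Complex.conj_conj _)
    rw [Finset.sum_congr rfl (fun s _ => hconj s)]
    by_cases hp : ∀ i ∈ A, t i = 0
    · rw [if_pos hp, if_pos hp]
      ring
    · rw [if_neg hp, if_neg hp]
      all_goals simp
  rw [Finset.sum_congr rfl (fun t _ => hstep1 t)] at hne
  rw [pair_sum A F1 F2 W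
      (fun t s hst => Finset.prod_congr rfl (fun v hv => by
        rw [hst v (Finset.mem_compl.mp (hC hv))]))
      (indic B) (fun i hi => indic_zero.mpr (hBA i hi))] at hne
  -- Step 2 : reindex the inner sum over s' by d := s' - s - indic B
  have hre : ∀ s : V → Fin 2,
      (∑ s' : V → Fin 2, if ∀ v ∉ A, s' v = s v + indic B v then F2 s' else 0)
      = ∑ d : V → Fin 2, if ∀ v ∉ A, d v = 0 then
          F2 (fun v => s v + indic B v + d v) else 0 := by
    intro s
    have hinv : Function.Involutive
        (fun (d : V → Fin 2) => (fun v => s v + indic B v + d v)) := by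
      intro d; funext v
      simp only []
      calc s v + indic B v + (s v + indic B v + d v)
          = d v + (s v + indic B v) + (s v + indic B v) := by abel
        _ = d v := fin2_addself _ _
    rw [← Function.Bijective.sum_comp hinv.bijective
      (fun s' => if ∀ v ∉ A, s' v = s v + indic B v then F2 s' else 0)]
    refine Finset.sum_congr rfl (fun d _ => ?_)
    have hcnd : (∀ v ∉ A, (fun v => s v + indic B v + d v) v = s v + indic B v)
        ↔ (∀ v ∉ A, d v = 0) := by
      refine forall₂_congr (fun v hv => ?_)
      simp only []
      rw [add_eq_left]
    rw [if_congr hcnd rfl rfl]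
  rw [Finset.sum_congr rfl (fun s _ => by rw [hre s])] at hne
  -- Step 3 : swap sums and pull out the support condition
  have hswap : (∑ s : V → Fin 2, F1 s * W s *
        ∑ d : V → Fin 2, if ∀ v ∉ A, d v = 0 then F2 (fun v => s v + indic B v + d v) else 0)
      = ∑ d : V → Fin 2, if ∀ v ∉ A, d v = 0 then
          (∑ s : V → Fin 2, F1 s * W s * F2 (fun v => s v + indic B v + d v)) else 0 := by
    rw [Finset.sum_congr rfl (fun s _ => Finset.mul_sum _ _ _), Finset.sum_comm]
    refine Finset.sum_congr rfl (fun d _ => ?_)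
    by_cases hd : ∀ v ∉ A, d v = 0
    · rw [if_pos hd]
      exact Finset.sum_congr rfl (fun s _ => by rw [if_pos hd])
    · rw [if_neg hd]
      exact Finset.sum_eq_zero (fun s _ => by rw [if_neg hd, mul_zero])
  rw [hswap] at hne
  obtain ⟨d, _, hdne⟩ := Finset.exists_ne_zero_of_sum_ne_zero hne
  have hdA : ∀ v ∉ A, d v = 0 := by
    by_contra h
    rw [if_neg h] at hdne
    exact hdne rfl
  rw [if_pos hdA] at hdne
  -- Step 4 : factorize the inner sum over s
  set w : V → Fin 2 := fun v => indic B v + d v with hwdef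
  set f : V → Fin 2 → ℂ := fun v u =>
    (if v ∈ A then eigVec (P v) (r v) u * (starRingEnd ℂ) (eigVec (P v) (r v) (u + d v)) else 1)
      * (-1:ℂ)^((ob G w v + (if v ∈ C then 1 else 0)) * u.val) with hfdef
  have hsummand : ∀ s : V → Fin 2, F1 s * W s * F2 (fun v => s v + indic B v + d v)
      = (∏ v ∈ C, (-1:ℂ)^((indic B v).val)) * ((2:ℂ)⁻¹) ^ (Fintype.card V)
        * Complex.I ^ cnt G w * ∏ v, f v (s v) := by
    intro s
    have hF2arg : F2 (fun v => s v + indic B v + d v)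
        = (∏ i ∈ A, (starRingEnd ℂ) (eigVec (P i) (r i) (s i + d i)))
          * (Complex.I ^ cnt G w * (∏ v, (-1:ℂ)^(ob G w v * (s v).val))
            * graphState G s) := by
      rw [hF2]
      simp only []
      congr 1
      · exact Finset.prod_congr rfl (fun i hi => by rw [indic_zero.mpr (hBA i hi), add_zero])
      · rw [show (fun v => s v + indic B v + d v) = (fun v => s v + w v) from
            funext fun v => add_assoc _ _ _]
        exact gs_add G s w
    have hWs : W s = (∏ v ∈ C, (-1:ℂ)^((s v).val)) * ∏ v ∈ C, (-1:ℂ)^((indic B v).val) := by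
      rw [hWdef]
      simp only []
      rw [← Finset.prod_mul_distrib]
      exact Finset.prod_congr rfl (fun v _ => sign_bit_add _ _)
    have hprod : (∏ v, f v (s v))
        = ((∏ i ∈ A, eigVec (P i) (r i) (s i))
            * ∏ i ∈ A, (starRingEnd ℂ) (eigVec (P i) (r i) (s i + d i)))
          * ((∏ v, (-1:ℂ)^(ob G w v * (s v).val)) * ∏ v ∈ C, (-1:ℂ)^((s v).val)) := by
      rw [hfdef]
      simp only []
      rw [Finset.prod_mul_distrib]
      congr 1
      · rw [Finset.prod_ite_mem, Finset.univ_inter, Finset.prod_mul_distrib]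
      · have hpt : ∀ v, (-1:ℂ)^((ob G w v + (if v ∈ C then 1 else 0)) * (s v).val)
            = (-1:ℂ)^(ob G w v * (s v).val) * (if v ∈ C then (-1:ℂ)^((s v).val) else 1) := by
          intro v
          rw [add_mul, pow_add]
          congr 1
          by_cases hv : v ∈ C <;> simp [hv]
        rw [Finset.prod_congr rfl (fun v _ => hpt v), Finset.prod_mul_distrib,
          Finset.prod_ite_mem, Finset.univ_inter]
    rw [hF1]
    simp only []
    rw [hF2arg, hWs, hprod]
    linear_combination ((∏ i ∈ A, eigVec (P i) (r i) (s i))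
        * (∏ i ∈ A, (starRingEnd ℂ) (eigVec (P i) (r i) (s i + d i)))
        * (∏ v ∈ C, (-1:ℂ)^((s v).val)) * (∏ v ∈ C, (-1:ℂ)^((indic B v).val))
        * Complex.I ^ cnt G w * (∏ v, (-1:ℂ)^(ob G w v * (s v).val))) * gs_sq G s
  rw [Finset.sum_congr rfl (fun s _ => hsummand s), ← Finset.mul_sum] at hdne
  have hfacsum : (∑ s : V → Fin 2, ∏ v, f v (s v)) = ∏ v, (f v 0 + f v 1) := by
    rw [← Fintype.prod_sum]
    exact Finset.prod_congr rfl (fun v _ => by rw [Fin.sum_univ_two])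
  rw [hfacsum] at hdne
  have hvne : ∀ v, f v 0 + f v 1 ≠ 0 := by
    intro v hv0
    exact hdne (by rw [Finset.prod_eq_zero (Finset.mem_univ v) hv0, mul_zero])
  -- Step 5 : construct S
  set S : Finset V := B ∪ univ.filter (fun v => d v = 1) with hSdef
  have hSmem : ∀ v, v ∈ S ↔ (v ∈ B ∨ d v = 1) := by
    intro v
    rw [hSdef, Finset.mem_union, Finset.mem_filter]
    simp
  have hw_eq : indic S = w := by
    funext v
    rw [hwdef]
    simp only []
    by_cases hvB : v ∈ B
    · have hd0 : d v = 0 := hdA v (Finset.mem_compl.mp (hB hvB))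
      rw [indic_one.mpr ((hSmem v).mpr (Or.inl hvB)), indic_one.mpr hvB, hd0]
      decide
    · by_cases hd1 : d v = 1
      · rw [indic_one.mpr ((hSmem v).mpr (Or.inr hd1)), indic_zero.mpr hvB, hd1]
        decide
      · have hd0 : d v = 0 := by
          rcases fin2_cases (d v) with h | h
          · exact h
          · exact absurd h hd1
        rw [indic_zero.mpr (fun hS => by
            rcases (hSmem v).mp hS with h | h
            exacts [hvB h, hd1 h]), indic_zero.mpr hvB, hd0]
        decide
  have hob : ∀ v, ob G w v = ob G (indic S) v := fun v => by rw [hw_eq]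
  -- per-vertex facts
  have hAfact : ∀ v ∈ A,
      (d v = 0 ∧ bitOf (ob G (indic S) v) = 0)
        ∨ (d v = xbit (P v) ∧ bitOf (ob G (indic S) v) = zbit (P v)) := by
    intro v hv
    have hsum : f v 0 + f v 1
        = ∑ u : Fin 2, eigVec (P v) (r v) u * (starRingEnd ℂ) (eigVec (P v) (r v) (u + d v))
            * (-1:ℂ)^((bitOf (ob G (indic S) v)).val * u.val) := by
      rw [Fin.sum_univ_two, hfdef]
      simp only [if_pos hv, if_neg (hCA v hv), add_zero]
      rw [hob v, pow_bitOf _ 0, pow_bitOf _ 1]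
    exact htable (P v) (r v) (d v) (bitOf (ob G (indic S) v)) (by rw [← hsum]; exact hvne v)
  have hOfact : ∀ v, v ∉ A → (v ∈ oddNbhd G S ↔ v ∈ C) := by
    intro v hv
    have h := hvne v
    rw [hfdef] at h
    simp only [if_neg hv, one_mul] at h
    by_cases hOdd : v ∈ oddNbhd G S <;> by_cases hvC : v ∈ C
    · exact iff_of_true hOdd hvC
    · exfalso
      apply h
      have he : Odd (ob G w v + (if v ∈ C then 1 else 0)) := by
        rw [if_neg hvC, add_zero, hob v]
        exact (mem_oddNbhd G).mp hOdd
      simp [he.neg_one_pow]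
    · exfalso
      apply h
      have he : Odd (ob G w v + (if v ∈ C then 1 else 0)) := by
        rw [if_pos hvC, hob v]
        exact Even.add_one (Nat.not_odd_iff_even.mp (fun ho => hOdd ((mem_oddNbhd G).mpr ho)))
      simp [he.neg_one_pow]
    · exact iff_of_false hOdd hvC
  have hSA : ∀ i ∈ A, (i ∈ S ↔ d i = 1) := by
    intro i hi
    rw [hSmem i]
    constructor
    · rintro (h | h)
      · exact absurd h (hBA i hi)
      · exact h
    · exact Or.inr
  have hSnA : ∀ v, v ∉ A → (v ∈ S ↔ v ∈ B) := by
    intro v hv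
    rw [hSmem v]
    constructor
    · rintro (h | h)
      · exact h
      · exact absurd h (by rw [hdA v hv]; decide)
    · exact Or.inl
  refine ⟨S, ?_, ?_, ?_⟩
  · ext i
    simp only [Finset.mem_inter, Finset.mem_filter]
    constructor
    · rintro ⟨hiS, hiA, hP0⟩
      have hd1 : d i = 1 := (hSA i hiA).mp hiS
      rcases hAfact i hiA with ⟨h0, _⟩ | ⟨ha, hb⟩
      · exact absurd (h0 ▸ hd1) (by decide)
      · have hx1 : xbit (P i) = 1 := by rw [← ha, hd1]
        have hb1 : bitOf (ob G (indic S) i) = 1 := by rw [hb, zbit_one.mpr hP0]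
        exact ⟨(mem_oddNbhd G).mpr ((odd_bitOf _).mp hb1), hiA, xbit_one.mp hx1⟩
    · rintro ⟨hiO, hiA, hP2⟩
      have hb1 : bitOf (ob G (indic S) i) = 1 := (odd_bitOf _).mpr ((mem_oddNbhd G).mp hiO)
      rcases hAfact i hiA with ⟨_, h0⟩ | ⟨ha, hb⟩
      · exact absurd (h0.symm.trans hb1) (by decide)
      · have hP0 : P i ≠ 0 := zbit_one.mp (by rw [← hb, hb1])
        have hd1 : d i = 1 := by rw [ha, xbit_one.mpr hP2]
        exact ⟨(hSA i hiA).mpr hd1, hiA, hP0⟩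
  · ext v
    simp only [Finset.mem_sdiff, Finset.mem_filter]
    by_cases hv : v ∈ A
    · constructor
      · rintro ⟨hvS, hnx⟩
        exfalso
        have hd1 : d v = 1 := (hSA v hv).mp hvS
        rcases hAfact v hv with ⟨h0, _⟩ | ⟨ha, _⟩
        · exact absurd (h0 ▸ hd1) (by decide)
        · exact hnx ⟨hv, xbit_one.mp (by rw [← ha, hd1])⟩
      · intro hvB
        exact absurd hvB (hBA v hv)
    · constructor
      · rintro ⟨hvS, _⟩
        exact (hSnA v hv).mp hvS
      · intro hvB
        exact ⟨(hSnA v hv).mpr hvB, fun h => hv h.1⟩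
  · ext v
    simp only [Finset.mem_sdiff, Finset.mem_filter]
    by_cases hv : v ∈ A
    · constructor
      · rintro ⟨hvO, hnz⟩
        exfalso
        have hb1 : bitOf (ob G (indic S) v) = 1 := (odd_bitOf _).mpr ((mem_oddNbhd G).mp hvO)
        rcases hAfact v hv with ⟨_, h0⟩ | ⟨_, hb⟩
        · exact absurd hb1 (by rw [h0]; decide)
        · exact hnz ⟨hv, zbit_one.mp (by rw [← hb, hb1])⟩
      · intro hvC
        exact absurd hvC (hCA v hv)
    · constructor
      · rintro ⟨hvO, _⟩
        exact (hOfact v hv).mp hvO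
      · intro hvC
        exact ⟨(hOfact v hv).mpr hvC, fun h => hv h.1⟩

end S10

/-- Lemma `lem:meastab`: for a collection `P_A = {r_i P_i}_{i∈A}` of signed Pauli observables
(`P : V → Fin 3` with `0 = X`, `1 = Y`, `2 = Z`; signs `r : V → Fin 2`), with
`x(P_A) = {i ∈ A : P_i ∈ {X,Y}}`, `z(P_A) = {i ∈ A : P_i ∈ {Y,Z}}`, if
`|⟨P_A||G⟩| = 2^{−|A|/2}` then a Pauli operator `M = X_{Mx} Z_{Mz}` (acting on `V ∖ A`)
satisfies `M ⟨P_A||G⟩ ≃ ⟨P_A||G⟩` iff there is `S ⊆ V(G)` with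
`S ∩ z(P_A) = Odd(S) ∩ x(P_A)` and `M ≃ X_{S∖x(P_A)} Z_{Odd(S)∖z(P_A)}`. -/
theorem stmt10 {V : Type*} [Fintype V] [DecidableEq V] (G : SimpleGraph V)
    [DecidableRel G.Adj] (A : Finset V) (P : V → Fin 3) (r : V → Fin 2)
    (hstrong : norm2 (braApply A (fun i => eigVec (P i) (r i)) (graphState G))
      = (2 : ℝ) ^ (-(A.card : ℤ)))
    (Mx Mz : Finset V) (hMx : Mx ⊆ Aᶜ) (hMz : Mz ⊆ Aᶜ) :
    (∃ c : ℂ, ‖c‖ = 1 ∧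
        Xop Mx (Zop Mz (braApply A (fun i => eigVec (P i) (r i)) (graphState G)))
          = c • braApply A (fun i => eigVec (P i) (r i)) (graphState G)) ↔
      ∃ S : Finset V,
        S ∩ (A.filter fun i => P i ≠ 0) = oddNbhd G S ∩ (A.filter fun i => P i ≠ 2) ∧
        ∃ c : ℂ, ‖c‖ = 1 ∧ ∀ ψ : (V → Fin 2) → ℂ,
          Xop Mx (Zop Mz ψ)
            = c • Xop (S \ (A.filter fun i => P i ≠ 2))
                (Zop (oddNbhd G S \ (A.filter fun i => P i ≠ 0)) ψ) := by
  classical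
  set ψ₀ := braApply A (fun i => eigVec (P i) (r i)) (graphState G) with hψ₀
  constructor
  · rintro ⟨c, hc1, hc⟩
    have hcne : c ≠ 0 := fun h => by rw [h, norm_zero] at hc1; norm_num at hc1
    have hnorm : (∑ t : V → Fin 2, (starRingEnd ℂ) (ψ₀ t) * ψ₀ t)
        = ((norm2 ψ₀ : ℝ) : ℂ) := by
      rw [norm2, Complex.ofReal_sum]
      refine Finset.sum_congr rfl (fun t _ => ?_)
      rw [mul_comm, Complex.mul_conj, Complex.normSq_eq_norm_sq]
    have hne : (∑ t : V → Fin 2, (starRingEnd ℂ) (ψ₀ t) * Xop Mx (Zop Mz ψ₀) t) ≠ 0 := by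
      have hval : (∑ t : V → Fin 2, (starRingEnd ℂ) (ψ₀ t) * Xop Mx (Zop Mz ψ₀) t)
          = c * ((norm2 ψ₀ : ℝ) : ℂ) := by
        rw [← hnorm, Finset.mul_sum]
        refine Finset.sum_congr rfl (fun t _ => ?_)
        rw [hc]
        simp only [Pi.smul_apply, smul_eq_mul]
        ring
      rw [hval, hstrong]
      exact mul_ne_zero hcne (Complex.ofReal_ne_zero.mpr (by positivity))
    obtain ⟨S, h1, h2, h3⟩ := S10.forward_core G A P r Mx Mz hMx hMz hne
    exact ⟨S, h1, 1, by norm_num, fun ψ => by rw [h2, h3, one_smul]⟩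
  · rintro ⟨S, hcond, c₀, hc₀, hop⟩
    obtain ⟨c, hc1, hkey⟩ := S10.backward_core G A P r S hcond
    refine ⟨c₀ * c, by rw [norm_mul, hc₀, hc1, one_mul], ?_⟩
    rw [hop ψ₀, hkey, smul_smul]
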